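/- The assignment E_{ij} ↦ ψ_i ψ_j* defines a Lie algebra representation of gl_∞ on F; equivalently, for all i, j, k, l ∈ ℤ the operator identity [ψ_i ψ_j*, ψ_k ψ_l*] = δ_{jk} ψ_i ψ_l* − δ_{li} ψ_k ψ_j* holds on F. -/

import Mathlib

open Finsupp

/-- A semi-infinite monomial: a strictly decreasing sequence `seq : ℕ → ℤ` such that
for some `m : ℤ` (its charge) one has `seq k = m - k` for all sufficiently large `k`. -/
structure SIM : Type where
  seq : ℕ → ℤ
  anti : StrictAnti seq
  ex_charge : ∃ m : ℤ, ∃ N : ℕ, ∀ k, N ≤ k → seq k = m - (k : ℤ)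

/-- Full fermionic Fock space: the free `ℂ`-vector space on the set of all
semi-infinite monomials. -/
abbrev FockF : Type := SIM →₀ ℂ

namespace SIM

/-- `φ` is a semi-infinite monomial of charge `m`. -/
def HasCharge (φ : SIM) (m : ℤ) : Prop := ∃ N : ℕ, ∀ k, N ≤ k → φ.seq k = m - (k : ℤ)

theorem exists_lt (φ : SIM) (j : ℤ) : ∃ n : ℕ, φ.seq n < j := by
  obtain ⟨m, N, hN⟩ := φ.ex_charge
  refine ⟨N + (m - j).toNat + 1, ?_⟩
  have h1 := hN (N + (m - j).toNat + 1) (by omega)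
  omega

/-- The position at which `j` is inserted into `φ`: the least `n` with `φ.seq n < j`.
If `i_s > j > i_{s+1}` this equals `s + 1`, and it equals `0` if `j > i_0`. -/
noncomputable def wedgePos (φ : SIM) (j : ℤ) : ℕ := Nat.find (φ.exists_lt j)

/-- The semi-infinite monomial obtained from `φ` by inserting `j` (assuming `j` does not
occur in `φ`). -/
noncomputable def insertSIM (φ : SIM) (j : ℤ) (hj : ∀ s, φ.seq s ≠ j) : SIM where
  seq k := if k < φ.wedgePos j then φ.seq k else if k = φ.wedgePos j then j else φ.seq (k - 1)
  anti := by
    have hs : φ.seq (φ.wedgePos j) < j := Nat.find_spec (φ.exists_lt j)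
    have hm : ∀ k, k < φ.wedgePos j → j < φ.seq k := by
      intro k hk
      have h1 := Nat.find_min (φ.exists_lt j) hk
      have h2 := hj k
      omega
    have ha : ∀ a b : ℕ, a < b → φ.seq b < φ.seq a := fun a b h => φ.anti h
    apply strictAnti_nat_of_succ_lt
    intro k
    rcases lt_trichotomy k (φ.wedgePos j) with hk | hk | hk
    · rcases Nat.lt_or_ge (k + 1) (φ.wedgePos j) with hk1 | hk1
      · rw [if_pos hk, if_pos hk1]
        exact ha k (k + 1) (by omega)
      · have hk1' : k + 1 = φ.wedgePos j := by omega
        rw [if_pos hk, if_neg (by omega), if_pos hk1']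
        exact hm k hk
    · rw [if_neg (by omega), if_neg (by omega), if_neg (by omega), if_pos hk,
        (by omega : k + 1 - 1 = k), hk]
      exact hs
    · rw [if_neg (by omega), if_neg (by omega), if_neg (by omega), if_neg (by omega),
        (by omega : k + 1 - 1 = k)]
      exact ha (k - 1) k (by omega)
  ex_charge := by
    obtain ⟨m, N, hN⟩ := φ.ex_charge
    refine ⟨m + 1, N + φ.wedgePos j + 1, fun k hk => ?_⟩
    rw [if_neg (by omega), if_neg (by omega)]
    have h3 := hN (k - 1) (by omega)
    omega

/-- The semi-infinite monomial obtained from `φ` by deleting the entry in position `s`. -/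
noncomputable def removeSIM (φ : SIM) (s : ℕ) : SIM where
  seq k := if k < s then φ.seq k else φ.seq (k + 1)
  anti := by
    apply strictAnti_nat_of_succ_lt
    intro k
    split_ifs <;> exact φ.anti (by omega)
  ex_charge := by
    obtain ⟨m, N, hN⟩ := φ.ex_charge
    refine ⟨m - 1, N + s, fun k hk => ?_⟩
    rw [if_neg (by omega)]
    have h3 := hN (k + 1) (by omega)
    omega

end SIM

open Classical in
/-- The wedging operator `ψ_j` on full fermionic Fock space.  On a basis element
`φ = (i_0, i_1, ...)` it is `0` if `j = i_s` for some `s`, and otherwise it is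
`(-1)^n` times the basis element obtained by inserting `j` in position `n`
(so `(-1)^{s+1}` when `i_s > j > i_{s+1}`, and `+1` when `j > i_0`). -/
noncomputable def psi (j : ℤ) : FockF →ₗ[ℂ] FockF :=
  Finsupp.lift FockF ℂ SIM fun φ =>
    if hj : ∀ s, φ.seq s ≠ j then
      ((-1 : ℂ) ^ (φ.wedgePos j)) • Finsupp.single (φ.insertSIM j hj) 1
    else 0

open Classical in
/-- The contracting operator `ψ_j^*` on full fermionic Fock space.  On a basis element
`φ = (i_0, i_1, ...)` it is `0` if `j ≠ i_s` for all `s`, and `(-1)^s` times the basis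
element obtained by deleting `i_s` if `j = i_s`. -/
noncomputable def psiStar (j : ℤ) : FockF →ₗ[ℂ] FockF :=
  Finsupp.lift FockF ℂ SIM fun φ =>
    if hj : ∃ s, φ.seq s = j then
      ((-1 : ℂ) ^ hj.choose) • Finsupp.single (φ.removeSIM hj.choose) 1
    else 0

/- ===================== Auxiliary development ===================== -/

namespace SIM

theorem ext' {φ ψ : SIM} (h : ∀ n, φ.seq n = ψ.seq n) : φ = ψ := by
  cases φ; cases ψ
  simp only [mk.injEq]
  exact funext h

theorem seq_inj (φ : SIM) {a b : ℕ} (h : φ.seq a = φ.seq b) : a = b :=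
  φ.anti.injective h

theorem seq_lt (φ : SIM) {a b : ℕ} (h : a < b) : φ.seq b < φ.seq a := φ.anti h

theorem wedgePos_spec (φ : SIM) (j : ℤ) : φ.seq (φ.wedgePos j) < j :=
  Nat.find_spec (φ.exists_lt j)

theorem le_of_lt_wedgePos (φ : SIM) {j : ℤ} {n : ℕ} (h : n < φ.wedgePos j) :
    j ≤ φ.seq n := not_lt.1 (Nat.find_min (φ.exists_lt j) h)

theorem wedgePos_le (φ : SIM) {j : ℤ} {n : ℕ} (h : φ.seq n < j) : φ.wedgePos j ≤ n :=
  Nat.find_le h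

theorem wedgePos_eq (φ : SIM) {j : ℤ} {p : ℕ} (h1 : φ.seq p < j)
    (h2 : ∀ n, n < p → j ≤ φ.seq n) : φ.wedgePos j = p := by
  rw [wedgePos, Nat.find_eq_iff]
  exact ⟨h1, fun n hn => not_lt.2 (h2 n hn)⟩

theorem insert_seq (φ : SIM) (j : ℤ) (hj : ∀ s, φ.seq s ≠ j) (k : ℕ) :
    (φ.insertSIM j hj).seq k =
      if k < φ.wedgePos j then φ.seq k else if k = φ.wedgePos j then j
      else φ.seq (k - 1) := rfl

theorem remove_seq (φ : SIM) (s k : ℕ) :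
    (φ.removeSIM s).seq k = if k < s then φ.seq k else φ.seq (k + 1) := rfl

theorem wedgePos_mono (φ : SIM) {i k : ℤ} (h : k ≤ i) :
    φ.wedgePos i ≤ φ.wedgePos k :=
  φ.wedgePos_le (lt_of_lt_of_le (φ.wedgePos_spec k) h)

theorem lt_of_lt_wedgePos (φ : SIM) {j : ℤ} {n : ℕ} (hj : ∀ s, φ.seq s ≠ j)
    (h : n < φ.wedgePos j) : j < φ.seq n :=
  lt_of_le_of_ne (φ.le_of_lt_wedgePos h) (Ne.symm (hj n))

/-- membership facts -/
theorem not_mem_insert {φ : SIM} {i j : ℤ} (hi : ∀ s, φ.seq s ≠ i)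
    (hj : ∀ s, φ.seq s ≠ j) (hij : i ≠ j) :
    ∀ s, (φ.insertSIM i hi).seq s ≠ j := by
  intro s
  rw [insert_seq]
  split_ifs with h1 h2
  · exact hj s
  · exact hij
  · exact hj (s - 1)

theorem mem_insert_self (φ : SIM) {i : ℤ} (hi : ∀ s, φ.seq s ≠ i) :
    (φ.insertSIM i hi).seq (φ.wedgePos i) = i := by
  rw [insert_seq]
  simp

theorem not_mem_remove_self {φ : SIM} {s : ℕ} {j : ℤ} (hs : φ.seq s = j) :
    ∀ t, (φ.removeSIM s).seq t ≠ j := by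
  intro t
  rw [remove_seq]
  split_ifs with h
  · intro hc; have := φ.seq_inj (hc.trans hs.symm); omega
  · intro hc; have := φ.seq_inj (hc.trans hs.symm); omega

theorem not_mem_remove {φ : SIM} {s : ℕ} {i : ℤ} (hi : ∀ t, φ.seq t ≠ i) :
    ∀ t, (φ.removeSIM s).seq t ≠ i := by
  intro t
  rw [remove_seq]
  split_ifs with h
  · exact hi t
  · exact hi (t + 1)

/-- Removing the inserted element gives back the original. -/
theorem remove_insert_self (φ : SIM) {i : ℤ} (hi : ∀ s, φ.seq s ≠ i) :
    (φ.insertSIM i hi).removeSIM (φ.wedgePos i) = φ := by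
  apply ext'
  intro n
  rw [remove_seq, insert_seq, insert_seq]
  split_ifs <;> first | rfl | omega | (congr 1; omega)

/-- The wedge position of a removed element. -/
theorem wedgePos_remove_self {φ : SIM} {s : ℕ} {j : ℤ} (hs : φ.seq s = j) :
    (φ.removeSIM s).wedgePos j = s := by
  apply wedgePos_eq
  · rw [remove_seq, if_neg (lt_irrefl s)]
    rw [← hs]; exact φ.seq_lt (by omega)
  · intro n hn
    rw [remove_seq, if_pos hn, ← hs]
    exact le_of_lt (φ.seq_lt hn)

/-- Re-inserting a removed element gives back the original. -/
theorem insert_remove_self {φ : SIM} {s : ℕ} {j : ℤ} (hs : φ.seq s = j) :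
    (φ.removeSIM s).insertSIM j (not_mem_remove_self hs) = φ := by
  apply ext'
  intro n
  rw [insert_seq, wedgePos_remove_self hs, remove_seq, remove_seq]
  split_ifs <;> first | (rw [← hs]; congr 1; omega) | omega | (congr 1; omega)

theorem mem_insert_of_mem {φ : SIM} {k x : ℤ} (hk : ∀ s, φ.seq s ≠ k) {s : ℕ}
    (hs : φ.seq s = x) : ∃ t, (φ.insertSIM k hk).seq t = x := by
  by_cases h : s < φ.wedgePos k
  · exact ⟨s, by rw [insert_seq, if_pos h, hs]⟩
  · refine ⟨s + 1, ?_⟩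
    rw [insert_seq, if_neg (by omega), if_neg (by omega)]
    simpa using hs

theorem mem_remove_of_ne {φ : SIM} {s t : ℕ} (hts : t ≠ s) :
    ∃ u, (φ.removeSIM s).seq u = φ.seq t := by
  by_cases h : t < s
  · exact ⟨t, by rw [remove_seq, if_pos h]⟩
  · refine ⟨t - 1, ?_⟩
    rw [remove_seq, if_neg (by omega)]
    congr 1
    omega

theorem wedgePos_insert_of_gt {φ : SIM} {i k : ℤ} (hi : ∀ s, φ.seq s ≠ i)
    (hk : ∀ s, φ.seq s ≠ k) (hki : k < i) :
    (φ.insertSIM k hk).wedgePos i = φ.wedgePos i := by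
  have hpq : φ.wedgePos i ≤ φ.wedgePos k := φ.wedgePos_mono hki.le
  apply wedgePos_eq
  · rw [insert_seq]
    split_ifs with h1 h2
    · exact φ.wedgePos_spec i
    · exact hki
    · omega
  · intro n hn
    rw [insert_seq, if_pos (by omega)]
    exact φ.le_of_lt_wedgePos hn

theorem wedgePos_insert_of_lt {φ : SIM} {i k : ℤ} (hi : ∀ s, φ.seq s ≠ i)
    (hk : ∀ s, φ.seq s ≠ k) (hki : k < i) :
    (φ.insertSIM i hi).wedgePos k = φ.wedgePos k + 1 := by
  have hpq : φ.wedgePos i ≤ φ.wedgePos k := φ.wedgePos_mono hki.le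
  apply wedgePos_eq
  · rw [insert_seq, if_neg (by omega), if_neg (by omega)]
    have h : φ.wedgePos k + 1 - 1 = φ.wedgePos k := by omega
    rw [h]
    exact φ.wedgePos_spec k
  · intro n hn
    rw [insert_seq]
    split_ifs with h1 h2
    · exact le_of_lt (lt_of_lt_of_le hki (φ.le_of_lt_wedgePos h1))
    · exact hki.le
    · exact φ.le_of_lt_wedgePos (show n - 1 < φ.wedgePos k by omega)

theorem insert_insert_comm {φ : SIM} {i k : ℤ} (hi : ∀ s, φ.seq s ≠ i)
    (hk : ∀ s, φ.seq s ≠ k) (hki : k < i)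
    (h1 : ∀ s, (φ.insertSIM k hk).seq s ≠ i) (h2 : ∀ s, (φ.insertSIM i hi).seq s ≠ k) :
    (φ.insertSIM k hk).insertSIM i h1 = (φ.insertSIM i hi).insertSIM k h2 := by
  have hpq : φ.wedgePos i ≤ φ.wedgePos k := φ.wedgePos_mono hki.le
  apply ext'
  intro n
  simp only [insert_seq, wedgePos_insert_of_gt hi hk hki, wedgePos_insert_of_lt hi hk hki]
  split_ifs <;> first | rfl | omega | (congr 1; omega)

theorem remove_remove_comm (φ : SIM) {s u : ℕ} (h : s ≤ u) :
    (φ.removeSIM (u + 1)).removeSIM s = (φ.removeSIM s).removeSIM u := by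
  apply ext'
  intro n
  simp only [remove_seq]
  split_ifs <;> first | rfl | omega | (congr 1; omega)

theorem wedgePos_remove_of_le {φ : SIM} {s : ℕ} {i : ℤ}
    (hp : φ.wedgePos i ≤ s) : (φ.removeSIM s).wedgePos i = φ.wedgePos i := by
  apply wedgePos_eq
  · rw [remove_seq]
    split_ifs with h
    · exact φ.wedgePos_spec i
    · exact lt_trans (φ.seq_lt (by omega)) (φ.wedgePos_spec i)
  · intro n hn
    rw [remove_seq, if_pos (by omega)]
    exact φ.le_of_lt_wedgePos hn

theorem wedgePos_remove_of_gt {φ : SIM} {s p' : ℕ} {i : ℤ}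
    (hp : φ.wedgePos i = p' + 1) (hs : s ≤ p') :
    (φ.removeSIM s).wedgePos i = p' := by
  apply wedgePos_eq
  · rw [remove_seq, if_neg (by omega)]
    have := φ.wedgePos_spec i
    rwa [hp] at this
  · intro n hn
    rw [remove_seq]
    split_ifs with h
    · exact φ.le_of_lt_wedgePos (by omega)
    · exact φ.le_of_lt_wedgePos (by omega)

theorem insert_remove_comm_le {φ : SIM} {s : ℕ} {i : ℤ} (hi : ∀ t, φ.seq t ≠ i)
    (hp : φ.wedgePos i ≤ s) (h1 : ∀ t, (φ.removeSIM s).seq t ≠ i) :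
    (φ.removeSIM s).insertSIM i h1 = (φ.insertSIM i hi).removeSIM (s + 1) := by
  apply ext'
  intro n
  simp only [insert_seq, remove_seq, wedgePos_remove_of_le hp]
  split_ifs <;> first | rfl | omega | (congr 1; omega)

theorem insert_remove_comm_gt {φ : SIM} {s p' : ℕ} {i : ℤ} (hi : ∀ t, φ.seq t ≠ i)
    (hp : φ.wedgePos i = p' + 1) (hs : s ≤ p') (h1 : ∀ t, (φ.removeSIM s).seq t ≠ i) :
    (φ.removeSIM s).insertSIM i h1 = (φ.insertSIM i hi).removeSIM s := by
  apply ext'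
  intro n
  simp only [insert_seq, remove_seq, wedgePos_remove_of_gt hp hs, hp]
  split_ifs <;> first | rfl | omega | (congr 1; omega)

end SIM

/- ===================== single-application lemmas ===================== -/

theorem psi_single_of_not_mem {i : ℤ} {φ : SIM} (hi : ∀ s, φ.seq s ≠ i) :
    psi i (Finsupp.single φ 1) =
      ((-1 : ℂ) ^ (φ.wedgePos i)) • Finsupp.single (φ.insertSIM i hi) 1 := by
  classical
  simp only [psi, Finsupp.lift_apply, Finsupp.sum_single_index, zero_smul, one_smul]
  rw [dif_pos hi]

theorem psi_single_of_mem {i : ℤ} {φ : SIM} {s : ℕ} (hs : φ.seq s = i) :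
    psi i (Finsupp.single φ 1) = 0 := by
  classical
  simp only [psi, Finsupp.lift_apply, Finsupp.sum_single_index, zero_smul, one_smul]
  rw [dif_neg]
  push_neg
  exact ⟨s, hs⟩

theorem psiStar_single_of_mem {j : ℤ} {φ : SIM} {s : ℕ} (hs : φ.seq s = j) :
    psiStar j (Finsupp.single φ 1) =
      ((-1 : ℂ) ^ s) • Finsupp.single (φ.removeSIM s) 1 := by
  classical
  have hj : ∃ t, φ.seq t = j := ⟨s, hs⟩
  have hcs : hj.choose = s := φ.seq_inj (hj.choose_spec.trans hs.symm)
  simp only [psiStar, Finsupp.lift_apply, Finsupp.sum_single_index, zero_smul, one_smul]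
  rw [dif_pos hj, hcs]

theorem psiStar_single_of_not_mem {j : ℤ} {φ : SIM} (hj : ∀ s, φ.seq s ≠ j) :
    psiStar j (Finsupp.single φ 1) = 0 := by
  classical
  simp only [psiStar, Finsupp.lift_apply, Finsupp.sum_single_index, zero_smul, one_smul]
  rw [dif_neg]
  rintro ⟨s, hs⟩
  exact hj s hs

theorem op_ext {f g : FockF →ₗ[ℂ] FockF}
    (h : ∀ φ, f (Finsupp.single φ 1) = g (Finsupp.single φ 1)) : f = g := by
  apply Finsupp.lhom_ext
  intro φ c
  have : (Finsupp.single φ c : FockF) = c • Finsupp.single φ 1 := by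
    rw [Finsupp.smul_single, smul_eq_mul, mul_one]
  rw [this, map_smul, map_smul, h]

theorem psi_single_of_mem' {i : ℤ} {φ : SIM} (h : ∃ s, φ.seq s = i) :
    psi i (Finsupp.single φ 1) = 0 := by
  obtain ⟨s, hs⟩ := h
  exact psi_single_of_mem hs

open SIM in
/-- CAR relation: `ψ_i ψ_k + ψ_k ψ_i = 0` on a basis vector, ordered case. -/
theorem psi_psi_aux {φ : SIM} {i k : ℤ} (hi : ∀ s, φ.seq s ≠ i)
    (hk : ∀ s, φ.seq s ≠ k) (hki : k < i) :
    psi i (psi k (Finsupp.single φ 1)) + psi k (psi i (Finsupp.single φ 1)) = 0 := by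
  have hik : i ≠ k := ne_of_gt hki
  have hni : ∀ s, (φ.insertSIM k hk).seq s ≠ i := not_mem_insert hk hi hik.symm
  have hnk : ∀ s, (φ.insertSIM i hi).seq s ≠ k := not_mem_insert hi hk hik
  rw [psi_single_of_not_mem hk, psi_single_of_not_mem hi, map_smul, map_smul,
    psi_single_of_not_mem hni, psi_single_of_not_mem hnk,
    wedgePos_insert_of_gt hi hk hki, wedgePos_insert_of_lt hi hk hki,
    insert_insert_comm hi hk hki hni hnk]
  rw [smul_smul, smul_smul, ← add_smul]
  have : ((-1 : ℂ) ^ φ.wedgePos k * (-1) ^ φ.wedgePos i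
      + (-1) ^ φ.wedgePos i * (-1) ^ (φ.wedgePos k + 1)) = 0 := by ring
  rw [this, zero_smul]

theorem psi_anticomm (i k : ℤ) : psi i ∘ₗ psi k + psi k ∘ₗ psi i = 0 := by
  apply op_ext
  intro φ
  simp only [LinearMap.add_apply, LinearMap.comp_apply, LinearMap.zero_apply]
  by_cases hi : ∃ s, φ.seq s = i
  · rw [psi_single_of_mem' hi, map_zero, add_zero]
    by_cases hk : ∃ t, φ.seq t = k
    · rw [psi_single_of_mem' hk, map_zero]
    · push_neg at hk
      obtain ⟨s, hs⟩ := hi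
      rw [psi_single_of_not_mem hk, map_smul,
        psi_single_of_mem' (SIM.mem_insert_of_mem hk hs), smul_zero]
  · push_neg at hi
    by_cases hk : ∃ t, φ.seq t = k
    · rw [psi_single_of_mem' hk, map_zero, zero_add]
      obtain ⟨t, ht⟩ := hk
      rw [psi_single_of_not_mem hi, map_smul,
        psi_single_of_mem' (SIM.mem_insert_of_mem hi ht), smul_zero]
    · push_neg at hk
      rcases lt_trichotomy i k with h | h | h
      · rw [add_comm]
        exact psi_psi_aux hk hi h
      · subst h
        rw [psi_single_of_not_mem hi, map_smul,
          psi_single_of_mem' ⟨_, SIM.mem_insert_self φ hi⟩, smul_zero, add_zero]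
      · exact psi_psi_aux hi hk h

open SIM in
theorem psiStar_psiStar_aux {φ : SIM} {j l : ℤ} {s u : ℕ} (hs : φ.seq s = j)
    (hu : φ.seq (u + 1) = l) (hsu : s ≤ u) :
    psiStar j (psiStar l (Finsupp.single φ 1))
      + psiStar l (psiStar j (Finsupp.single φ 1)) = 0 := by
  have h1 : (φ.removeSIM (u + 1)).seq s = j := by
    rw [remove_seq, if_pos (by omega)]; exact hs
  have h2 : (φ.removeSIM s).seq u = l := by
    rw [remove_seq, if_neg (by omega)]; exact hu
  rw [psiStar_single_of_mem hu, psiStar_single_of_mem hs, map_smul, map_smul,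
    psiStar_single_of_mem h1, psiStar_single_of_mem h2, remove_remove_comm φ hsu]
  rw [smul_smul, smul_smul, ← add_smul]
  have : ((-1 : ℂ) ^ (u + 1) * (-1) ^ s + (-1) ^ s * (-1) ^ u) = 0 := by ring
  rw [this, zero_smul]

theorem psiStar_anticomm (j l : ℤ) :
    psiStar j ∘ₗ psiStar l + psiStar l ∘ₗ psiStar j = 0 := by
  apply op_ext
  intro φ
  simp only [LinearMap.add_apply, LinearMap.comp_apply, LinearMap.zero_apply]
  by_cases hj : ∃ s, φ.seq s = j
  · obtain ⟨s, hs⟩ := hj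
    by_cases hl : ∃ t, φ.seq t = l
    · obtain ⟨t, ht⟩ := hl
      rcases lt_trichotomy s t with h | h | h
      · obtain ⟨u, rfl⟩ : ∃ u, t = u + 1 := ⟨t - 1, by omega⟩
        exact psiStar_psiStar_aux hs ht (by omega)
      · subst h
        have : j = l := hs.symm.trans ht
        subst this
        rw [psiStar_single_of_mem hs, map_smul,
          psiStar_single_of_not_mem (SIM.not_mem_remove_self hs), smul_zero, add_zero]
      · obtain ⟨u, rfl⟩ : ∃ u, s = u + 1 := ⟨s - 1, by omega⟩
        rw [add_comm]
        exact psiStar_psiStar_aux ht hs (by omega)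
    · push_neg at hl
      rw [psiStar_single_of_not_mem hl, map_zero, zero_add,
        psiStar_single_of_mem hs, map_smul,
        psiStar_single_of_not_mem (SIM.not_mem_remove hl), smul_zero]
  · push_neg at hj
    rw [psiStar_single_of_not_mem hj, map_zero, add_zero]
    by_cases hl : ∃ t, φ.seq t = l
    · obtain ⟨t, ht⟩ := hl
      rw [psiStar_single_of_mem ht, map_smul,
        psiStar_single_of_not_mem (SIM.not_mem_remove hj), smul_zero]
    · push_neg at hl
      rw [psiStar_single_of_not_mem hl, map_zero]

open SIM in
theorem psi_psiStar_anticomm (i j : ℤ) :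
    psi i ∘ₗ psiStar j + psiStar j ∘ₗ psi i
      = if i = j then (LinearMap.id : FockF →ₗ[ℂ] FockF) else 0 := by
  apply op_ext
  intro φ
  simp only [LinearMap.add_apply, LinearMap.comp_apply]
  rw [apply_ite (fun f : FockF →ₗ[ℂ] FockF => f (Finsupp.single φ 1))]
  simp only [LinearMap.id_apply, LinearMap.zero_apply]
  by_cases hj : ∃ s, φ.seq s = j
  · obtain ⟨s, hs⟩ := hj
    rw [psiStar_single_of_mem hs, map_smul]
    by_cases hi : ∃ t, φ.seq t = i
    · obtain ⟨t, ht⟩ := hi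
      rw [psi_single_of_mem ht, map_zero, add_zero]
      by_cases hij : i = j
      · subst hij
        have hts : t = s := φ.seq_inj (ht.trans hs.symm)
        subst hts
        rw [if_pos rfl, psi_single_of_not_mem (not_mem_remove_self ht),
          wedgePos_remove_self ht, insert_remove_self ht, smul_smul, ← pow_add,
          ← two_mul, pow_mul, neg_one_sq, one_pow, one_smul]
      · rw [if_neg hij]
        have hts : t ≠ s := fun h => hij (ht ▸ h ▸ hs)
        rw [psi_single_of_mem' ⟨_, (mem_remove_of_ne hts).choose_spec.trans ht⟩, smul_zero]
    · push_neg at hi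
      have hij : i ≠ j := fun h => hi s (h ▸ hs)
      rw [if_neg hij]
      have hrm : ∀ t, (φ.removeSIM s).seq t ≠ i := not_mem_remove hi
      rcases lt_or_gt_of_ne hij with hlt | hgt
      · -- i < j : insertion position of i is after s
        have hsp : s < φ.wedgePos i := by
          by_contra h'
          push_neg at h'
          have h1 := φ.wedgePos_spec i
          have h2 : φ.seq s ≤ φ.seq (φ.wedgePos i) := φ.anti.antitone h'
          omega
        obtain ⟨p', hp'⟩ : ∃ p', φ.wedgePos i = p' + 1 := ⟨φ.wedgePos i - 1, by omega⟩
        have hsp' : s ≤ p' := by omega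
        have hins : (φ.insertSIM i hi).seq s = j := by
          rw [insert_seq, if_pos (by omega)]; exact hs
        rw [psi_single_of_not_mem hrm, wedgePos_remove_of_gt hp' hsp',
          psi_single_of_not_mem hi, map_smul, psiStar_single_of_mem hins,
          insert_remove_comm_gt hi hp' hsp' hrm, hp', smul_smul, smul_smul, ← add_smul]
        have : ((-1 : ℂ) ^ s * (-1) ^ p' + (-1) ^ (p' + 1) * (-1) ^ s) = 0 := by ring
        rw [this, zero_smul]
      · -- j < i : insertion position of i is at or before s
        have hple : φ.wedgePos i ≤ s := φ.wedgePos_le (by rw [hs]; exact hgt)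
        have hins : (φ.insertSIM i hi).seq (s + 1) = j := by
          rw [insert_seq, if_neg (by omega), if_neg (by omega)]
          simpa using hs
        rw [psi_single_of_not_mem hrm, wedgePos_remove_of_le hple,
          psi_single_of_not_mem hi, map_smul, psiStar_single_of_mem hins,
          insert_remove_comm_le hi hple hrm, smul_smul, smul_smul, ← add_smul]
        have : ((-1 : ℂ) ^ s * (-1) ^ φ.wedgePos i
            + (-1) ^ φ.wedgePos i * (-1) ^ (s + 1)) = 0 := by ring
        rw [this, zero_smul]
  · push_neg at hj
    rw [psiStar_single_of_not_mem hj, map_zero, zero_add]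
    by_cases hi : ∃ t, φ.seq t = i
    · obtain ⟨t, ht⟩ := hi
      have hij : i ≠ j := fun h => hj t (h ▸ ht)
      rw [if_neg hij, psi_single_of_mem ht, map_zero]
    · push_neg at hi
      rw [psi_single_of_not_mem hi, map_smul]
      by_cases hij : i = j
      · subst hij
        rw [if_pos rfl, psiStar_single_of_mem (mem_insert_self φ hi),
          remove_insert_self φ hi, smul_smul, ← pow_add, ← two_mul, pow_mul,
          neg_one_sq, one_pow, one_smul]
      · rw [if_neg hij, psiStar_single_of_not_mem (not_mem_insert hi hj hij), smul_zero]

theorem commutator_helper {R : Type*} [Ring R] {a b c d e1 e2 : R}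
    (h1 : b * c = e1 - c * b) (h2 : d * a = e2 - a * d)
    (h3 : a * c = -(c * a)) (h4 : b * d = -(d * b))
    (he1 : a * e1 = e1 * a) (he2 : c * e2 = e2 * c) :
    a * b * (c * d) - c * d * (a * b) = e1 * (a * d) - e2 * (c * b) := by
  have k1 : a * b * (c * d) = e1 * (a * d) - c * (a * d) * b := by
    calc a * b * (c * d) = a * (b * c) * d := by noncomm_ring
      _ = a * (e1 - c * b) * d := by rw [h1]
      _ = a * e1 * d - (a * c) * (b * d) := by noncomm_ring
      _ = a * e1 * d - (-(c * a)) * (-(d * b)) := by rw [h3, h4]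
      _ = e1 * (a * d) - c * (a * d) * b := by rw [he1]; noncomm_ring
  have k2 : c * d * (a * b) = e2 * (c * b) - c * (a * d) * b := by
    calc c * d * (a * b) = c * (d * a) * b := by noncomm_ring
      _ = c * (e2 - a * d) * b := by rw [h2]
      _ = c * e2 * b - c * (a * d) * b := by noncomm_ring
      _ = e2 * (c * b) - c * (a * d) * b := by rw [he2]; noncomm_ring
  rw [k1, k2]
  abel

/-- the assignment `E_{ij} ↦ ψ_i ψ_j^*` defines a representation of
`gl_∞` on `F`; equivalently, the operator identity
`[ψ_i ψ_j^*, ψ_k ψ_l^*] = δ_{jk} ψ_i ψ_l^* − δ_{li} ψ_k ψ_j^*` holds on `F`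
for all `i, j, k, l ∈ ℤ`. -/
theorem glInfinity_representation (i j k l : ℤ) :
    (psi i ∘ₗ psiStar j) ∘ₗ (psi k ∘ₗ psiStar l) - (psi k ∘ₗ psiStar l) ∘ₗ (psi i ∘ₗ psiStar j)
      = (if j = k then psi i ∘ₗ psiStar l else 0) - (if l = i then psi k ∘ₗ psiStar j else 0) := by
  set a := psi i
  set b := psiStar j
  set c := psi k
  set d := psiStar l
  set e1 : FockF →ₗ[ℂ] FockF := if j = k then LinearMap.id else 0 with he1def
  set e2 : FockF →ₗ[ℂ] FockF := if l = i then LinearMap.id else 0 with he2def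
  have h1 : b * c = e1 - c * b := by
    have := psi_psiStar_anticomm k j
    have hkj : (if k = j then (LinearMap.id : FockF →ₗ[ℂ] FockF) else 0) = e1 := by
      rw [he1def]
      simp only [eq_comm]
    rw [hkj] at this
    refine @eq_sub_of_add_eq (FockF →ₗ[ℂ] FockF) _ _ _ _ ?_
    rw [add_comm]
    exact this
  have h2 : d * a = e2 - a * d := by
    have := psi_psiStar_anticomm i l
    have hil : (if i = l then (LinearMap.id : FockF →ₗ[ℂ] FockF) else 0) = e2 := by
      rw [he2def]
      simp only [eq_comm]
    rw [hil] at this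
    refine @eq_sub_of_add_eq (FockF →ₗ[ℂ] FockF) _ _ _ _ ?_
    rw [add_comm]
    exact this
  have h3 : a * c = -(c * a) := by
    exact @eq_neg_of_add_eq_zero_left (FockF →ₗ[ℂ] FockF) _ _ _ (psi_anticomm i k)
  have h4 : b * d = -(d * b) := by
    exact @eq_neg_of_add_eq_zero_left (FockF →ₗ[ℂ] FockF) _ _ _ (psiStar_anticomm j l)
  have he1 : a * e1 = e1 * a := by
    rw [he1def]
    split_ifs <;> simp [Module.End.mul_eq_comp]
  have he2 : c * e2 = e2 * c := by
    rw [he2def]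
    split_ifs <;> simp [Module.End.mul_eq_comp]
  have key := commutator_helper (R := Module.End ℂ FockF) h1 h2 h3 h4 he1 he2
  have he1m : e1 * (a * d) = if j = k then a ∘ₗ d else 0 := by
    rw [he1def, Module.End.mul_eq_comp]
    split_ifs <;> simp [Module.End.mul_eq_comp]
  have he2m : e2 * (c * b) = if l = i then c ∘ₗ b else 0 := by
    rw [he2def, Module.End.mul_eq_comp]
    split_ifs <;> simp [Module.End.mul_eq_comp]
  rw [he1m, he2m] at key
  rw [← key]
  simp only [Module.End.mul_eq_comp]
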